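/- Let A be a D×D real symmetric matrix with eigenvalues λ₁ ≥ λ₂ ≥ ... ≥ λ_D. Define μ = tr(A)/D and σ² = tr(A²)/D − (tr(A)/D)². Then λ₁ ≤ μ + √(D−1)·σ. -/

import Mathlib

open Matrix

lemma ws_scalar {D : ℕ} (hD : 1 ≤ D) (lam : Fin D → ℝ) (i : Fin D)
    (μ σ : ℝ)
    (hμ : μ = (∑ j, lam j) / D)
    (hσ : σ ^ 2 = (∑ j, lam j ^ 2) / D - ((∑ j, lam j) / D) ^ 2)
    (hσ0 : 0 ≤ σ) :
    lam i ≤ μ + Real.sqrt ((D : ℝ) - 1) * σ := by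
  have hD0 : (0 : ℝ) < D := by exact_mod_cast Nat.lt_of_lt_of_le Nat.zero_lt_one hD
  have hD1 : (0 : ℝ) ≤ (D : ℝ) - 1 := by
    have : (1 : ℝ) ≤ D := by exact_mod_cast hD
    linarith
  set t := lam i
  set s := ∑ j ∈ Finset.univ.erase i, lam j with hs
  set q := ∑ j ∈ Finset.univ.erase i, lam j ^ 2 with hq
  have hS : ∑ j, lam j = t + s := by
    rw [hs, ← Finset.add_sum_erase _ _ (Finset.mem_univ i)]
  have hQ : ∑ j, lam j ^ 2 = t ^ 2 + q := by
    rw [hq, ← Finset.add_sum_erase _ _ (Finset.mem_univ i)]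
  -- Cauchy–Schwarz on the complement of i
  have hcard : ((Finset.univ.erase i).card : ℝ) = (D : ℝ) - 1 := by
    rw [Finset.card_erase_of_mem (Finset.mem_univ i)]
    simp only [Finset.card_univ, Fintype.card_fin]
    have : 1 ≤ D := hD
    push_cast [Nat.cast_sub this]
    ring
  have hCS : s ^ 2 ≤ ((D : ℝ) - 1) * q := by
    have h2 := Finset.sum_mul_sq_le_sq_mul_sq (Finset.univ.erase i) (fun _ => (1:ℝ)) lam
    simp only [one_pow, one_mul, Finset.sum_const, nsmul_eq_mul, mul_one] at h2
    rw [hcard] at h2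
    simpa [← hs, ← hq] using h2
  -- key quadratic inequality
  have hkey : (t - μ) ^ 2 ≤ ((D : ℝ) - 1) * σ ^ 2 := by
    rw [hμ, hσ, hS, hQ]
    have hDne : (D : ℝ) ≠ 0 := ne_of_gt hD0
    have key2 : ((D:ℝ) * t - (t + s)) ^ 2 ≤ ((D:ℝ) - 1) * ((D:ℝ) * (t ^ 2 + q) - (t + s) ^ 2) := by
      nlinarith [mul_nonneg hD0.le (sub_nonneg.mpr hCS)]
    have e1 : (t - (t + s) / D) ^ 2 = ((D:ℝ) * t - (t + s)) ^ 2 / (D:ℝ) ^ 2 := by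
      field_simp
    have e2 : ((D:ℝ) - 1) * ((t ^ 2 + q) / D - ((t + s) / D) ^ 2)
        = ((D:ℝ) - 1) * ((D:ℝ) * (t ^ 2 + q) - (t + s) ^ 2) / (D:ℝ) ^ 2 := by
      field_simp
    rw [e1, e2]
    gcongr
  have h1 : t - μ ≤ Real.sqrt ((D : ℝ) - 1) * σ := by
    calc t - μ ≤ |t - μ| := le_abs_self _
    _ = Real.sqrt ((t - μ) ^ 2) := (Real.sqrt_sq_eq_abs _).symm
    _ ≤ Real.sqrt (((D : ℝ) - 1) * σ ^ 2) := Real.sqrt_le_sqrt hkey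
    _ = Real.sqrt ((D : ℝ) - 1) * σ := by
        rw [Real.sqrt_mul hD1, Real.sqrt_sq hσ0]
  linarith

theorem wolkowicz_styan_upper_bound {D : ℕ} (hD : 1 ≤ D)
    (A : Matrix (Fin D) (Fin D) ℝ) (hA : A.IsHermitian)
    (μ σ : ℝ)
    (hμ : μ = A.trace / D)
    (hσ : σ ^ 2 = (A * A).trace / D - (A.trace / D) ^ 2)
    (hσ0 : 0 ≤ σ) :
    ∀ i : Fin D, hA.eigenvalues i ≤ μ + Real.sqrt ((D : ℝ) - 1) * σ := by
  have htr : A.trace = ∑ j, hA.eigenvalues j := by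
    conv_lhs => rw [hA.spectral_theorem, Unitary.conjStarAlgAut_apply]
    rw [Matrix.trace_mul_cycle]
    simp [Matrix.mul_assoc, Unitary.coe_star_mul_self, Matrix.trace_diagonal]
  have htr2 : (A * A).trace = ∑ j, hA.eigenvalues j ^ 2 := by
    conv_lhs => rw [hA.spectral_theorem, Unitary.conjStarAlgAut_apply]
    simp only [← Matrix.mul_assoc]
    rw [Matrix.mul_assoc _ (star (hA.eigenvectorUnitary : Matrix (Fin D) (Fin D) ℝ)) _,
      Unitary.coe_star_mul_self, mul_one, Matrix.trace_mul_cycle]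
    simp only [← Matrix.mul_assoc]
    rw [Unitary.coe_star_mul_self, one_mul]
    simp [Matrix.diagonal_mul_diagonal, Matrix.trace_diagonal, sq]
  intro i
  exact ws_scalar hD hA.eigenvalues i μ σ (by rw [hμ, htr]) (by rw [hσ, htr, htr2]) hσ0
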